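/- Let P ⊆ ℕ^k be a periodic coset such that P ∩ ℕ^k_{≥m} is nonempty for every m ∈ ℕ. Then there exists α > 0 such that P contains infinitely many α-dense points. -/
import Mathlib


open Finset

/-- `c ∈ ℕ^k` is `α`-dense: every strictly positive coordinate is at least `α‖c‖`,
where `‖c‖` is the sum of the coordinates. -/
def AlphaDense {k : ℕ} (α : ℝ) (c : Fin k → ℕ) : Prop :=
  ∀ i, 0 < c i → α * (∑ j, (c j : ℝ)) ≤ (c i : ℝ)

/-- A periodic coset in `ℕ^k`:
`{ b + n1·p1 + ⋯ + nl·pl : n1, …, nl ∈ ℕ }`. -/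
def IsPeriodicCoset {k : ℕ} (P : Set (Fin k → ℕ)) : Prop :=
  ∃ (base : Fin k → ℕ) (l : ℕ) (per : Fin l → Fin k → ℕ),
    P = {x | ∃ n : Fin l → ℕ, x = base + ∑ i, n i • per i}

/-- A set is semilinear if it is a finite union of periodic cosets. -/
def Semilinear {k : ℕ} (S : Set (Fin k → ℕ)) : Prop :=
  ∃ (m : ℕ) (P : Fin m → Set (Fin k → ℕ)),
    (∀ j, IsPeriodicCoset (P j)) ∧ S = ⋃ j, P j

/-- `φ` is almost constant on `D`: `φ⁻¹(0) ∩ D` or `φ⁻¹(1) ∩ D` is finite. -/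
def AlmostConstantOn {k : ℕ} (φ : (Fin k → ℕ) → Bool) (D : Set (Fin k → ℕ)) : Prop :=
  {m ∈ D | φ m = false}.Finite ∨ {m ∈ D | φ m = true}.Finite

/-- `φ` is eventually constant: constant on `ℕ^k_{≥m0}` for some `m0`. -/
def EventuallyConstantPred {k : ℕ} (φ : (Fin k → ℕ) → Bool) : Prop :=
  ∃ m0 : ℕ, ∀ m m' : Fin k → ℕ, (∀ i, m0 ≤ m i) → (∀ i, m0 ≤ m' i) → φ m = φ m'

/-- If a periodic coset `P ⊆ ℕ^k` meets `ℕ^k_{≥m}` for every `m`, then there is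
`α > 0` such that `P` contains infinitely many `α`-dense points. -/
theorem stmt8 {k : ℕ} (hk : 0 < k) (P : Set (Fin k → ℕ)) (hP : IsPeriodicCoset P)
    (hbig : ∀ m : ℕ, ∃ x ∈ P, ∀ i, m ≤ x i) :
    ∃ α : ℝ, 0 < α ∧ {x ∈ P | AlphaDense α x}.Infinite := by
  obtain ⟨base, l, per, rfl⟩ := hP
  obtain ⟨q, hqP, hq⟩ := hbig ((∑ j, base j) + 1)
  obtain ⟨n, hn⟩ := hqP
  set s : Fin k → ℕ := ∑ i, n i • per i with hs
  have hs1 : ∀ i, 1 ≤ s i := by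
    intro i
    have h1 : (∑ j, base j) + 1 ≤ q i := hq i
    have h2 : q i = base i + s i := by rw [hn]; rfl
    have h3 : base i ≤ ∑ j, base j := Finset.single_le_sum (fun j _ => Nat.zero_le _) (Finset.mem_univ i)
    omega
  -- total mass
  set T : ℝ := ∑ j, ((base j : ℝ) + (s j : ℝ)) with hT
  have hT1 : 1 ≤ T := by
    have i0 : Fin k := ⟨0, hk⟩
    have h1 : (1 : ℝ) ≤ (base i0 : ℝ) + (s i0 : ℝ) := by
      have h2 : (1 : ℝ) ≤ (s i0 : ℝ) := by exact_mod_cast hs1 i0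
      have h3 : (0 : ℝ) ≤ (base i0 : ℝ) := Nat.cast_nonneg _
      linarith
    calc (1 : ℝ) ≤ (base i0 : ℝ) + (s i0 : ℝ) := h1
      _ ≤ T := by
          rw [hT]
          exact Finset.single_le_sum (f := fun j => (base j : ℝ) + (s j : ℝ))
            (fun j _ => by positivity) (Finset.mem_univ i0)
  have hTpos : 0 < T := lt_of_lt_of_le one_pos hT1
  refine ⟨1 / T, by positivity, ?_⟩
  refine Set.infinite_of_injective_forall_mem
    (f := fun t : ℕ => base + (t + 1) • s) ?_ ?_
  · intro a b hab
    have i0 : Fin k := ⟨0, hk⟩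
    have h := congrFun hab i0
    simp only [Pi.add_apply, Pi.smul_apply, smul_eq_mul] at h
    have := hs1 i0
    have : (a + 1) * s i0 = (b + 1) * s i0 := by omega
    have := Nat.eq_of_mul_eq_mul_right (hs1 i0) this
    omega
  · intro t
    constructor
    · refine ⟨fun i => (t + 1) * n i, ?_⟩
      show base + (t + 1) • s = _
      rw [hs, Finset.smul_sum]
      congr 1
      exact Finset.sum_congr rfl fun i _ => by rw [smul_smul]
    · intro i _
      have hxi : ((base + (t + 1) • s) i : ℝ) = (base i : ℝ) + (t + 1) * (s i : ℝ) := by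
        simp only [Pi.add_apply, Pi.smul_apply, smul_eq_mul]
        push_cast
        ring
      have hsum : (∑ j, (((base + (t + 1) • s) j : ℕ) : ℝ)) =
          ∑ j, ((base j : ℝ) + (t + 1) * (s j : ℝ)) := by
        refine Finset.sum_congr rfl fun j _ => ?_
        simp only [Pi.add_apply, Pi.smul_apply, smul_eq_mul]
        push_cast
        ring
      rw [hxi, hsum]
      have hbound : ∑ j, ((base j : ℝ) + (t + 1) * (s j : ℝ)) ≤ (t + 1) * T := by
        rw [hT, Finset.mul_sum]
        refine Finset.sum_le_sum fun j _ => ?_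
        have h1 : (base j : ℝ) ≤ (t + 1) * (base j : ℝ) := by
          nlinarith [Nat.cast_nonneg (α := ℝ) (base j), Nat.cast_nonneg (α := ℝ) t]
        nlinarith
      have hsi : (1 : ℝ) ≤ (s i : ℝ) := by exact_mod_cast hs1 i
      have h2 : (1 / T) * ∑ j, ((base j : ℝ) + (t + 1) * (s j : ℝ)) ≤ (t + 1 : ℝ) := by
        rw [div_mul_eq_mul_div, one_mul, div_le_iff₀ hTpos]
        linarith
      have h3 : ((t : ℝ) + 1) ≤ (base i : ℝ) + (t + 1) * (s i : ℝ) := by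
        nlinarith [Nat.cast_nonneg (α := ℝ) (base i), Nat.cast_nonneg (α := ℝ) t]
      linarith
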